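/- Let θ ∈ (0, π/2], φ = arctan(1/sin θ), ψ₁ = π/2 − φ, ψ₂ = π/2 + φ, p_max = 1/2 + √(1 + sin²θ)/4, and let ε > 0 and ε_A ∈ [0, 1/2]. Define p'' = 1/2 + (1/8) sin θ (sin ψ₁ + sin ψ₂) + (1/4) √(1/4 − ε_A²) (cos ψ₁ − cos ψ₂) + (1/4) ε_A cos θ (cos ψ₁ + cos ψ₂). If p'' ≥ p_max − ε·p_max, then ε_A ≤ √(2 ε p_max / cos ψ₁). -/

import Mathlib

set_option maxHeartbeats 1600000 in
theorem stmt_7 (θ : ℝ) (hθ : θ ∈ Set.Ioc 0 (Real.pi / 2))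
    (φ ψ₁ ψ₂ pmax : ℝ)
    (hφ : φ = Real.arctan (1 / Real.sin θ))
    (hψ₁ : ψ₁ = Real.pi / 2 - φ) (hψ₂ : ψ₂ = Real.pi / 2 + φ)
    (hpmax : pmax = 1 / 2 + Real.sqrt (1 + Real.sin θ ^ 2) / 4)
    (ε : ℝ) (hε : 0 < ε) (εA : ℝ) (hεA : εA ∈ Set.Icc (0 : ℝ) (1 / 2))
    (p'' : ℝ)
    (hp'' : p'' = 1 / 2 + (1 / 8) * Real.sin θ * (Real.sin ψ₁ + Real.sin ψ₂)
        + (1 / 4) * Real.sqrt (1 / 4 - εA ^ 2) * (Real.cos ψ₁ - Real.cos ψ₂)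
        + (1 / 4) * εA * Real.cos θ * (Real.cos ψ₁ + Real.cos ψ₂))
    (h : p'' ≥ pmax - ε * pmax) :
    εA ≤ Real.sqrt (2 * ε * pmax / Real.cos ψ₁) := by
  obtain ⟨hθ0, hθ2⟩ := hθ
  obtain ⟨hεA0, hεA2⟩ := hεA
  have hpi := Real.pi_pos
  have hs : 0 < Real.sin θ :=
    Real.sin_pos_of_pos_of_lt_pi hθ0 (lt_of_le_of_lt hθ2 (by linarith))
  set s := Real.sin θ with hsdef
  have hr0 : (0:ℝ) < 1 + s ^ 2 := by positivity
  set r := Real.sqrt (1 + s ^ 2) with hrdef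
  have hr : 0 < r := Real.sqrt_pos.2 hr0
  have hr2 : r ^ 2 = 1 + s ^ 2 := Real.sq_sqrt hr0.le
  have hsq : Real.sqrt (1 + (1 / s) ^ 2) = r / s := by
    have h1 : 1 + (1 / s) ^ 2 = (1 + s ^ 2) / s ^ 2 := by field_simp; ring
    rw [h1, Real.sqrt_div hr0.le, Real.sqrt_sq hs.le]
  have hcosφ : Real.cos φ = s / r := by
    rw [hφ, Real.cos_arctan, hsq]
    field_simp
  have hsinφ : Real.sin φ = 1 / r := by
    rw [hφ, Real.sin_arctan, hsq]
    field_simp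
  have hsψ₁ : Real.sin ψ₁ = s / r := by rw [hψ₁, Real.sin_pi_div_two_sub, hcosφ]
  have hcψ₁ : Real.cos ψ₁ = 1 / r := by rw [hψ₁, Real.cos_pi_div_two_sub, hsinφ]
  have hsψ₂ : Real.sin ψ₂ = s / r := by
    rw [hψ₂, Real.sin_add, Real.sin_pi_div_two, Real.cos_pi_div_two, hcosφ]; ring
  have hcψ₂ : Real.cos ψ₂ = -(1 / r) := by
    rw [hψ₂, Real.cos_add, Real.sin_pi_div_two, Real.cos_pi_div_two, hsinφ]; ring
  set q := Real.sqrt (1 / 4 - εA ^ 2) with hqdef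
  have hq : q ≤ 1 / 2 - εA ^ 2 := by
    have h1 : (0:ℝ) ≤ 1 / 2 - εA ^ 2 := by nlinarith
    have h2 : 1 / 4 - εA ^ 2 ≤ (1 / 2 - εA ^ 2) ^ 2 := by nlinarith
    calc q ≤ Real.sqrt ((1 / 2 - εA ^ 2) ^ 2) := Real.sqrt_le_sqrt h2
      _ = 1 / 2 - εA ^ 2 := Real.sqrt_sq h1
  have hpmax' : pmax = 1 / 2 + r / 4 := hpmax
  clear_value s r q
  have hpmaxpos : 0 < pmax := by rw [hpmax']; positivity
  -- From h: pmax - p'' ≤ ε * pmax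
  have hkey : (1 / 4 - q / 2) * (1 / r) ≤ ε * pmax := by
    have hp2 : p'' = 1 / 2 + (1 / 4) * s * (s / r) + (1 / 2) * q * (1 / r) := by
      rw [hp'', hsψ₁, hsψ₂, hcψ₁, hcψ₂]; ring
    have hrr : s * (s / r) + 1 / r = r := by
      have h' : r * r = 1 + s ^ 2 := by nlinarith [hr2]
      field_simp
      linarith [h']
    have hss : s * (s / r) = r - 1 / r := by linarith
    have : pmax - p'' = (1 / 4 - q / 2) * (1 / r) := by
      rw [hp2, hpmax']
      linear_combination (-1/4 : ℝ) * hss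
    linarith [h, this]
  have hεA2le : εA ^ 2 ≤ 2 * ε * pmax * r := by
    have h1 : εA ^ 2 / 2 * (1 / r) ≤ (1 / 4 - q / 2) * (1 / r) := by
      have : εA ^ 2 / 2 ≤ 1 / 4 - q / 2 := by linarith
      apply mul_le_mul_of_nonneg_right this (by positivity)
    have h2 : εA ^ 2 / 2 * (1 / r) ≤ ε * pmax := le_trans h1 hkey
    have h3 : εA ^ 2 / 2 ≤ ε * pmax * r := by
      have := mul_le_mul_of_nonneg_right h2 hr.le
      calc εA ^ 2 / 2 = εA ^ 2 / 2 * (1 / r) * r := by field_simp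
        _ ≤ ε * pmax * r := this
    linarith
  have hrhs : 2 * ε * pmax / Real.cos ψ₁ = 2 * ε * pmax * r := by
    rw [hcψ₁]; field_simp
  rw [hrhs]
  exact (Real.le_sqrt hεA0 (by positivity)).mpr hεA2le
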